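/- Let ρ be a density matrix on ℂ^d and w a d×d unitary matrix such that ρ·(w·ρ·wᴴ) = 0. Then Matrix.trace (w·ρ) = 0. -/

import Mathlib

open Matrix ComplexOrder

/-- If `ρ` is a density matrix on `ℂ^d`, `w` is unitary and the strict orthogonality
condition `ρ * (w * ρ * wᴴ) = 0` holds, then the decoherence factor vanishes:
`Tr(w * ρ) = 0`. -/
theorem stmt_9 {d : ℕ} (ρ w : Matrix (Fin d) (Fin d) ℂ)
    (hρ : ρ.PosSemidef) (htr : ρ.trace = 1) (hw : wᴴ * w = 1)
    (horth : ρ * (w * ρ * wᴴ) = 0) :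
    (w * ρ).trace = 0 := by
  obtain ⟨s, hs2, hsH⟩ : ∃ s : Matrix (Fin d) (Fin d) ℂ, s * s = ρ ∧ sᴴ = s := by
    open scoped MatrixOrder in
    exact ⟨CFC.sqrt ρ, CFC.sqrt_mul_sqrt_self ρ hρ.nonneg, (CFC.sqrt_nonneg ρ).posSemidef.1⟩
  -- Step 1: ρ * w * ρ = 0
  have h1 : ρ * (w * ρ) = 0 := by
    have := congrArg (· * w) horth
    simpa [Matrix.mul_assoc, hw] using this
  -- Step 2: s * (w * ρ) = 0
  have h2 : s * (w * ρ) = 0 := by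
    rw [← Matrix.conjTranspose_mul_self_eq_zero]
    calc (s * (w * ρ))ᴴ * (s * (w * ρ))
        = (w * ρ)ᴴ * (ρ * (w * ρ)) := by
          rw [Matrix.conjTranspose_mul, hsH, Matrix.mul_assoc, ← Matrix.mul_assoc s,
            hs2]
      _ = 0 := by rw [h1, Matrix.mul_zero]
  -- Step 3: s * wᴴ * s = 0
  have h3 : s * (wᴴ * s) = 0 := by
    rw [← Matrix.conjTranspose_mul_self_eq_zero]
    have h2' : s * w * s * s = 0 := by
      have := h2
      rw [← hs2] at this
      simpa [Matrix.mul_assoc] using this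
    have h2'' : s * s * wᴴ * s = 0 := by
      have := congrArg conjTranspose h2'
      simpa [Matrix.conjTranspose_mul, hsH, Matrix.mul_assoc] using this
    calc (s * (wᴴ * s))ᴴ * (s * (wᴴ * s))
        = s * w * (s * s * wᴴ * s) := by
          simp [Matrix.conjTranspose_mul, hsH, Matrix.mul_assoc]
      _ = 0 := by rw [h2'', Matrix.mul_zero]
  -- Step 4: conclude
  have h4 : s * (w * s) = 0 := by
    have := congrArg conjTranspose h3
    simpa [Matrix.conjTranspose_mul, hsH, Matrix.mul_assoc] using this
  calc (w * ρ).trace = (s * (w * s)).trace := by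
        rw [← hs2, ← Matrix.mul_assoc, Matrix.trace_mul_comm]
    _ = 0 := by rw [h4, Matrix.trace_zero]
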